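/- arXiv:2012.14017 — 2 statements merged into one kernel-verified Lean document; each statement's English description precedes it below -/
import Mathlib

section
/- Let g : ℝᵖ → ℝ ∪ {+∞} be proper, lsc, convex and differentiable on Ω = int(dom g). Then the conjugate g* is strictly convex on every convex subset C of ∇g(Ω). -/
open scoped InnerProductSpace
noncomputable section

/-- A proper extended-real-valued function: never `⊥` and finite somewhere. -/
def ProperE {V : Type*} (f : V → EReal) : Prop := (∀ x, f x ≠ ⊥) ∧ ∃ x, f x ≠ ⊤

/-- Convexity of an extended-real-valued function, via convexity of its epigraph. -/
def ConvexFnE {V : Type*} [AddCommGroup V] [Module ℝ V] (f : V → EReal) : Prop :=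
  Convex ℝ {q : V × ℝ | f q.1 ≤ (q.2 : EReal)}

/-- Fenchel conjugate of an extended-real-valued function on an inner product space. -/
def econj {V : Type*} [NormedAddCommGroup V] [InnerProductSpace ℝ V]
    (f : V → EReal) (y : V) : EReal :=
  ⨆ x, ((⟪x, y⟫_ℝ : ℝ) : EReal) - f x

open Filter Topology

section Aux

variable {V : Type*} [NormedAddCommGroup V] [InnerProductSpace ℝ V] [CompleteSpace V]

/-- The gradient of a convex function at an interior point is a subgradient. -/
private lemma aux_subgrad (g : V → EReal) (hproper : ∀ x, g x ≠ ⊥)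
    (hconv : Convex ℝ {q : V × ℝ | g q.1 ≤ (q.2 : EReal)})
    (G : V → ℝ) (gr : V → V) (Ω : Set V) (hΩo : IsOpen Ω)
    (hG : ∀ x ∈ Ω, g x = ((G x : ℝ) : EReal))
    (hgrad : ∀ x ∈ Ω, HasGradientAt G (gr x) x)
    (x : V) (hx : x ∈ Ω) (z : V) :
    ((G x + ⟪gr x, z - x⟫_ℝ : ℝ) : EReal) ≤ g z := by
  by_cases hz : g z = ⊤
  · simp [hz]
  set gz : ℝ := (g z).toReal with hgz
  have hgzc : g z = (gz : EReal) := (EReal.coe_toReal hz (hproper z)).symm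
  set c : ℝ → V := fun t => x + t • (z - x) with hc
  have hcd : HasDerivAt c (z - x) 0 := by
    have : HasDerivAt (fun t : ℝ => t • (z - x)) ((1:ℝ) • (z - x)) 0 :=
      (hasDerivAt_id 0).smul_const (z - x)
    have h2 := this.const_add x
    rw [one_smul] at h2
    exact h2
  have hGd : HasDerivAt (fun t => G (c t)) ⟪gr x, z - x⟫_ℝ 0 := by
    have h1 := (hgrad x hx).hasFDerivAt
    have h1' : HasFDerivAt G ((InnerProductSpace.toDual ℝ V) (gr x)) (c 0) := by
      simpa [hc] using h1
    have := h1'.comp_hasDerivAt 0 hcd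
    exact this
  have hev : ∀ᶠ t in 𝓝[>] (0:ℝ), slope (fun t => G (c t)) 0 t ≤ gz - G x := by
    have hmem : ∀ᶠ t in 𝓝 (0:ℝ), c t ∈ Ω := by
      have : ContinuousAt c 0 := hcd.continuousAt
      exact this.preimage_mem_nhds (hΩo.mem_nhds (by simpa [hc] using hx))
    have hlt1 : ∀ᶠ t in 𝓝 (0:ℝ), t < 1 := eventually_lt_nhds zero_lt_one
    filter_upwards [nhdsWithin_le_nhds hmem, nhdsWithin_le_nhds hlt1,
      self_mem_nhdsWithin] with t hct ht1 ht0
    have ht0' : (0:ℝ) < t := ht0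
    have hxe : (x, G x) ∈ {q : V × ℝ | g q.1 ≤ (q.2 : EReal)} := by
      simp [Set.mem_setOf_eq, hG x hx]
    have hze : (z, gz) ∈ {q : V × ℝ | g q.1 ≤ (q.2 : EReal)} := by
      simp [Set.mem_setOf_eq, hgzc]
    have hcomb := hconv hxe hze (by linarith : (0:ℝ) ≤ 1 - t) ht0'.le (by ring)
    have heq : (1 - t) • (x, G x) + t • (z, gz) = (c t, (1 - t) * G x + t * gz) := by
      simp only [Prod.smul_mk, Prod.mk_add_mk, Prod.mk.injEq, smul_eq_mul, hc]
      constructor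
      · module
      · trivial
    rw [heq] at hcomb
    simp only [Set.mem_setOf_eq] at hcomb
    rw [hG _ hct] at hcomb
    have hGle : G (c t) ≤ (1 - t) * G x + t * gz := by exact_mod_cast hcomb
    have hc0 : c 0 = x := by simp [hc]
    have hs : slope (fun t => G (c t)) 0 t = (G (c t) - G x) / t := by
      rw [slope_def_field, hc0]; ring_nf
    rw [hs, div_le_iff₀ ht0']
    nlinarith
  have hlim : Tendsto (slope (fun t => G (c t)) 0) (𝓝[>] (0:ℝ)) (𝓝 ⟪gr x, z - x⟫_ℝ) := by
    have := hasDerivAt_iff_tendsto_slope.mp hGd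
    exact this.mono_left (nhdsWithin_mono 0 (fun t ht => ne_of_gt ht))
  have hkey : ⟪gr x, z - x⟫_ℝ ≤ gz - G x := le_of_tendsto hlim hev
  rw [hgzc]
  exact_mod_cast by linarith

/-- Value of the conjugate when `y` is a subgradient at `x`. -/
private lemma aux_conj_val (g : V → EReal) (hproper : ∀ x, g x ≠ ⊥)
    (G : V → ℝ) (x : V) (y : V)
    (hgx : g x = ((G x : ℝ) : EReal))
    (hsub : ∀ z, ((G x + ⟪y, z - x⟫_ℝ : ℝ) : EReal) ≤ g z) :
    econj g y = ((⟪x, y⟫_ℝ - G x : ℝ) : EReal) := by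
  apply le_antisymm
  · apply iSup_le
    intro z
    by_cases hz : g z = ⊤
    · rw [hz, EReal.sub_top]
      exact bot_le
    · have hzc : g z = (((g z).toReal : ℝ) : EReal) := (EReal.coe_toReal hz (hproper z)).symm
      rw [hzc, ← EReal.coe_sub]
      apply EReal.coe_le_coe_iff.mpr
      have h1 : G x + ⟪y, z - x⟫_ℝ ≤ (g z).toReal := by
        have := hsub z
        rw [hzc] at this
        exact_mod_cast this
      have h2 : ⟪y, z - x⟫_ℝ = ⟪y, z⟫_ℝ - ⟪y, x⟫_ℝ := inner_sub_right y z x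
      have h3 : ⟪z, y⟫_ℝ = ⟪y, z⟫_ℝ := real_inner_comm y z
      have h4 : ⟪x, y⟫_ℝ = ⟪y, x⟫_ℝ := real_inner_comm y x
      linarith
  · have := le_iSup (fun z => ((⟪z, y⟫_ℝ : ℝ) : EReal) - g z) x
    rw [hgx, ← EReal.coe_sub] at this
    exact this

/-- Subgradients at a point of differentiability agree with the gradient. -/
private lemma aux_subgrad_unique (g : V → EReal)
    (G : V → ℝ) (gr : V → V) (Ω : Set V) (hΩo : IsOpen Ω)
    (hG : ∀ x ∈ Ω, g x = ((G x : ℝ) : EReal))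
    (x : V) (hx : x ∈ Ω) (hgrad : HasGradientAt G (gr x) x) (w : V)
    (hsub : ∀ z, ((G x + ⟪w, z - x⟫_ℝ : ℝ) : EReal) ≤ g z) :
    w = gr x := by
  set F : V → ℝ := fun z => G z - ⟪w, z⟫_ℝ with hF
  have hmin : IsLocalMin F x := by
    filter_upwards [hΩo.mem_nhds hx] with z hz
    have h1 := hsub z
    rw [hG z hz] at h1
    have h1' : G x + ⟪w, z - x⟫_ℝ ≤ G z := by exact_mod_cast h1
    have h2 : ⟪w, z - x⟫_ℝ = ⟪w, z⟫_ℝ - ⟪w, x⟫_ℝ := inner_sub_right w z x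
    simp only [hF]
    linarith
  have hFd : HasFDerivAt F ((InnerProductSpace.toDual ℝ V) (gr x)
      - (InnerProductSpace.toDual ℝ V) w) x := by
    have h1 : HasFDerivAt G ((InnerProductSpace.toDual ℝ V) (gr x)) x := hgrad.hasFDerivAt
    have h2 : HasFDerivAt (fun z => ⟪w, z⟫_ℝ) ((InnerProductSpace.toDual ℝ V) w) x :=
      ((InnerProductSpace.toDual ℝ V) w).hasFDerivAt
    exact h1.sub h2
  have h0 := hmin.hasFDerivAt_eq_zero hFd
  have hz : (InnerProductSpace.toDual ℝ V) (gr x - w) = 0 := by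
    rw [map_sub]; exact h0
  have := (InnerProductSpace.toDual ℝ V).injective
    (by rw [hz, map_zero] :
      (InnerProductSpace.toDual ℝ V) (gr x - w) = (InnerProductSpace.toDual ℝ V) 0)
  exact (sub_eq_zero.mp this).symm

end Aux

/-- If `g` is proper lsc convex and differentiable on `Ω = int(dom g)` (with finite values
`G` and gradient map `gr` there), then `g*` is strictly convex on every convex
subset `C ⊆ ∇g(Ω)`. -/
theorem conjugate_strictly_convex_on_gradient_image (p : ℕ)
    (g : EuclideanSpace ℝ (Fin p) → EReal)
    (hproper : ProperE g) (hlsc : LowerSemicontinuous g) (hconv : ConvexFnE g)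
    (G : EuclideanSpace ℝ (Fin p) → ℝ) (gr : EuclideanSpace ℝ (Fin p) → EuclideanSpace ℝ (Fin p))
    (Ω : Set (EuclideanSpace ℝ (Fin p))) (hΩ : Ω = interior {x | g x ≠ ⊤})
    (hG : ∀ x ∈ Ω, g x = ((G x : ℝ) : EReal))
    (hgrad : ∀ x ∈ Ω, HasGradientAt G (gr x) x) :
    ∀ C ⊆ gr '' Ω, Convex ℝ C →
      ∀ y₁ ∈ C, ∀ y₂ ∈ C, y₁ ≠ y₂ → ∀ t : ℝ, t ∈ Set.Ioo (0 : ℝ) 1 →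
        econj g (t • y₁ + (1 - t) • y₂)
          < ((t : ℝ) : EReal) * econj g y₁ + ((1 - t : ℝ) : EReal) * econj g y₂ := by
  intro C hC hCconv y₁ hy₁ y₂ hy₂ hne t ht
  obtain ⟨ht0, ht1⟩ := ht
  have hΩo : IsOpen Ω := hΩ ▸ isOpen_interior
  have hbot := hproper.1
  set y : EuclideanSpace ℝ (Fin p) := t • y₁ + (1 - t) • y₂ with hy
  have hyC : y ∈ C := hCconv hy₁ hy₂ ht0.le (by linarith) (by ring)
  obtain ⟨x, hxΩ, hxy⟩ := hC hyC
  obtain ⟨x₁, hx₁Ω, hx₁y⟩ := hC hy₁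
  obtain ⟨x₂, hx₂Ω, hx₂y⟩ := hC hy₂
  -- subgradient inequalities
  have hsub : ∀ u ∈ Ω, ∀ z, ((G u + ⟪gr u, z - u⟫_ℝ : ℝ) : EReal) ≤ g z :=
    fun u hu z => aux_subgrad g hbot hconv G gr Ω hΩo hG hgrad u hu z
  -- conjugate values
  have hcy : econj g y = ((⟪x, y⟫_ℝ - G x : ℝ) : EReal) := by
    refine aux_conj_val g hbot G x y (hG x hxΩ) ?_
    intro z; rw [← hxy]; exact hsub x hxΩ z
  have hcy₁ : econj g y₁ = ((⟪x₁, y₁⟫_ℝ - G x₁ : ℝ) : EReal) := by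
    refine aux_conj_val g hbot G x₁ y₁ (hG x₁ hx₁Ω) ?_
    intro z; rw [← hx₁y]; exact hsub x₁ hx₁Ω z
  have hcy₂ : econj g y₂ = ((⟪x₂, y₂⟫_ℝ - G x₂ : ℝ) : EReal) := by
    refine aux_conj_val g hbot G x₂ y₂ (hG x₂ hx₂Ω) ?_
    intro z; rw [← hx₂y]; exact hsub x₂ hx₂Ω z
  set r₁ : ℝ := ⟪x₁, y₁⟫_ℝ - G x₁ with hr₁
  set r₂ : ℝ := ⟪x₂, y₂⟫_ℝ - G x₂ with hr₂
  set a₁ : ℝ := ⟪x, y₁⟫_ℝ - G x with ha₁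
  set a₂ : ℝ := ⟪x, y₂⟫_ℝ - G x with ha₂
  -- a_i ≤ r_i, from the definition of the conjugate as a supremum
  have hle : ∀ (w : EuclideanSpace ℝ (Fin p)) (r : ℝ), econj g w = (r : EReal) →
      ⟪x, w⟫_ℝ - G x ≤ r := by
    intro w r hw
    have h0 := le_iSup (fun z => ((⟪z, w⟫_ℝ : ℝ) : EReal) - g z) x
    rw [hG x hxΩ, ← EReal.coe_sub] at h0
    have h0' : ((⟪x, w⟫_ℝ - G x : ℝ) : EReal) ≤ econj g w := h0
    rw [hw] at h0'
    exact_mod_cast h0'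
  have ha₁le : a₁ ≤ r₁ := hle y₁ r₁ hcy₁
  have ha₂le : a₂ ≤ r₂ := hle y₂ r₂ hcy₂
  -- strictness: equality would force y_i = gr x = y, contradicting y₁ ≠ y₂
  have hstrict : ∀ (w : EuclideanSpace ℝ (Fin p)) (r : ℝ), econj g w = (r : EReal) →
      ⟪x, w⟫_ℝ - G x = r → w = gr x := by
    intro w r hw heq
    refine aux_subgrad_unique g G gr Ω hΩo hG x hxΩ (hgrad x hxΩ) w ?_
    intro z
    by_cases hz : g z = ⊤
    · simp [hz]
    · have hzc : g z = (((g z).toReal : ℝ) : EReal) := (EReal.coe_toReal hz (hbot z)).symm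
      have h1 : ((⟪z, w⟫_ℝ : ℝ) : EReal) - g z ≤ econj g w :=
        le_iSup (fun z => ((⟪z, w⟫_ℝ : ℝ) : EReal) - g z) z
      rw [hw, hzc, ← EReal.coe_sub] at h1
      have h1' : ⟪z, w⟫_ℝ - (g z).toReal ≤ r := by exact_mod_cast h1
      rw [hzc]
      apply EReal.coe_le_coe_iff.mpr
      have h2 : ⟪w, z - x⟫_ℝ = ⟪w, z⟫_ℝ - ⟪w, x⟫_ℝ := inner_sub_right w z x
      have h3 : ⟪z, w⟫_ℝ = ⟪w, z⟫_ℝ := real_inner_comm w z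
      have h4 : ⟪x, w⟫_ℝ = ⟪w, x⟫_ℝ := real_inner_comm w x
      linarith
  have hy₁ne : a₁ ≠ r₁ := by
    intro h
    have h1 : y₁ = y := by rw [hstrict y₁ r₁ hcy₁ h, hxy]
    have h5 : (1 - t) • (y₂ - y₁) = y - y₁ := by rw [hy]; module
    rw [← h1, sub_self] at h5
    rcases smul_eq_zero.mp h5 with h6 | h6
    · linarith
    · exact hne (sub_eq_zero.mp h6).symm
  have hy₂ne : a₂ ≠ r₂ := by
    intro h
    have h1 : y₂ = y := by rw [hstrict y₂ r₂ hcy₂ h, hxy]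
    have h5 : t • (y₁ - y₂) = y - y₂ := by rw [hy]; module
    rw [← h1, sub_self] at h5
    rcases smul_eq_zero.mp h5 with h6 | h6
    · linarith
    · exact hne (sub_eq_zero.mp h6)
  have ha₁lt : a₁ < r₁ := lt_of_le_of_ne ha₁le hy₁ne
  have ha₂lt : a₂ < r₂ := lt_of_le_of_ne ha₂le hy₂ne
  -- conclude
  rw [hcy, hcy₁, hcy₂, ← EReal.coe_mul, ← EReal.coe_mul, ← EReal.coe_add]
  apply EReal.coe_lt_coe_iff.mpr
  have hinner : ⟪x, y⟫_ℝ = t * ⟪x, y₁⟫_ℝ + (1 - t) * ⟪x, y₂⟫_ℝ := by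
    rw [hy, inner_add_right, real_inner_smul_right, real_inner_smul_right]
  have e1 : t * a₁ < t * r₁ := by exact mul_lt_mul_of_pos_left ha₁lt ht0
  have e2 : (1 - t) * a₂ < (1 - t) * r₂ := mul_lt_mul_of_pos_left ha₂lt (by linarith)
  have : ⟪x, y⟫_ℝ - G x = t * a₁ + (1 - t) * a₂ := by
    rw [hinner, ha₁, ha₂]; ring
  linarith
end
end

section
/- A proper, lsc, convex function g : ℝᵖ → ℝ ∪ {+∞} is m-strongly convex (m > 0) if and only if its Fenchel conjugate g* is differentiable on ℝᵖ with (1/m)-Lipschitz continuous gradient. -/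
open scoped InnerProductSpace
noncomputable section

/-- `m`-strong convexity of an extended-real-valued function:
`g − (m/2)‖·‖²` is convex. -/
def StrongConvexE {V : Type*} [NormedAddCommGroup V] [NormedSpace ℝ V]
    (m : ℝ) (g : V → EReal) : Prop :=
  ConvexFnE (fun x => g x - ((m / 2 * ‖x‖ ^ 2 : ℝ) : EReal))

variable {V : Type*} [NormedAddCommGroup V] [InnerProductSpace ℝ V]

lemma norm_combo_sq (x y : V) (a b : ℝ) (hab : a + b = 1) :
    ‖a • x + b • y‖ ^ 2 = a * ‖x‖ ^ 2 + b * ‖y‖ ^ 2 - a * b * ‖x - y‖ ^ 2 := by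
  have e1 : ‖a • x + b • y‖ ^ 2 = ‖a • x‖ ^ 2 + 2 * ⟪a • x, b • y⟫_ℝ + ‖b • y‖ ^ 2 :=
    norm_add_sq_real _ _
  have e2 : ‖x - y‖ ^ 2 = ‖x‖ ^ 2 - 2 * ⟪x, y⟫_ℝ + ‖y‖ ^ 2 := norm_sub_sq_real _ _
  have e3 : ⟪a • x, b • y⟫_ℝ = a * (b * ⟪x, y⟫_ℝ) := by
    rw [real_inner_smul_left, real_inner_smul_right]
  have e4 : ‖a • x‖ ^ 2 = a ^ 2 * ‖x‖ ^ 2 := by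
    rw [norm_smul]; simp [mul_pow, sq_abs]
  have e5 : ‖b • y‖ ^ 2 = b ^ 2 * ‖y‖ ^ 2 := by
    rw [norm_smul]; simp [mul_pow, sq_abs]
  rw [e1, e3, e4, e5, e2]
  linear_combination (a * ‖x‖ ^ 2 + b * ‖y‖ ^ 2) * hab

lemma ConvexFnE.combo {f : V → EReal} (hf : ConvexFnE f) {x y : V} {r s : ℝ}
    (hx : f x ≤ (r : EReal)) (hy : f y ≤ (s : EReal)) {a b : ℝ}
    (ha : 0 ≤ a) (hb : 0 ≤ b) (hab : a + b = 1) :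
    f (a • x + b • y) ≤ ((a * r + b * s : ℝ) : EReal) := by
  have h := hf (show (x, r) ∈ {q : V × ℝ | f q.1 ≤ (q.2 : EReal)} from hx)
    (show (y, s) ∈ _ from hy) ha hb hab
  simpa [Prod.smul_mk, smul_eq_mul] using h

lemma convexFnE_of {f : V → EReal}
    (h : ∀ (x y : V) (r s : ℝ), f x ≤ (r : EReal) → f y ≤ (s : EReal) → ∀ a b : ℝ,
      0 ≤ a → 0 ≤ b → a + b = 1 → f (a • x + b • y) ≤ ((a * r + b * s : ℝ) : EReal)) :
    ConvexFnE f := by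
  rintro ⟨x, r⟩ hx ⟨y, s⟩ hy a b ha hb hab
  exact h x y r s hx hy a b ha hb hab

lemma sub_re_le_iff {x : EReal} (hx : x ≠ ⊥) (c r : ℝ) :
    x - (c : EReal) ≤ (r : EReal) ↔ x ≤ ((r + c : ℝ) : EReal) := by
  rw [EReal.sub_le_iff_le_add (Or.inl (EReal.coe_ne_bot c)) (Or.inl (EReal.coe_ne_top c)),
    EReal.coe_add]

lemma strongConvexE_iff {m : ℝ} {g : V → EReal} (hg : ∀ x, g x ≠ ⊥) :
    StrongConvexE m g ↔ ∀ (x y : V) (r s : ℝ), g x ≤ (r : EReal) → g y ≤ (s : EReal) →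
      ∀ a b : ℝ, 0 ≤ a → 0 ≤ b → a + b = 1 →
      g (a • x + b • y) ≤ ((a * r + b * s - m / 2 * (a * b) * ‖x - y‖ ^ 2 : ℝ) : EReal) := by
  constructor
  · intro hsc x y r s hx hy a b ha hb hab
    have hx' : g x - ((m / 2 * ‖x‖ ^ 2 : ℝ) : EReal) ≤ ((r - m / 2 * ‖x‖ ^ 2 : ℝ) : EReal) := by
      rw [sub_re_le_iff (hg x)]; simpa using hx
    have hy' : g y - ((m / 2 * ‖y‖ ^ 2 : ℝ) : EReal) ≤ ((s - m / 2 * ‖y‖ ^ 2 : ℝ) : EReal) := by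
      rw [sub_re_le_iff (hg y)]; simpa using hy
    have h := hsc.combo hx' hy' ha hb hab
    rw [sub_re_le_iff (hg _)] at h
    refine h.trans ?_
    rw [EReal.coe_le_coe_iff, norm_combo_sq x y a b hab]
    ring_nf
    exact le_refl _
  · intro h
    apply convexFnE_of
    intro x y r s hx hy a b ha hb hab
    rw [sub_re_le_iff (hg x)] at hx
    rw [sub_re_le_iff (hg y)] at hy
    rw [sub_re_le_iff (hg _)]
    have h2 := h x y _ _ hx hy a b ha hb hab
    refine h2.trans ?_
    rw [EReal.coe_le_coe_iff, norm_combo_sq x y a b hab]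
    ring_nf
    exact le_refl _

variable {V : Type*} [NormedAddCommGroup V] [InnerProductSpace ℝ V]

lemma lsc_exists_min {f : V → EReal} (hf : LowerSemicontinuous f) {K : Set V}
    (hK : IsCompact K) (hne : K.Nonempty) : ∃ x ∈ K, ∀ y ∈ K, f x ≤ f y := by
  by_cases htop : ∀ y ∈ K, f y = ⊤
  · obtain ⟨x, hx⟩ := hne
    exact ⟨x, hx, fun y hy => by rw [htop x hx, htop y hy]⟩
  push_neg at htop
  set μ := sInf (f '' K) with hμ
  have hμtop : μ ≠ ⊤ := by
    obtain ⟨y, hy, hyt⟩ := htop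
    intro h
    exact hyt (top_le_iff.mp (h ▸ sInf_le (Set.mem_image_of_mem f hy)))
  have hI : Nonempty {c : EReal // μ < c} := ⟨⟨⊤, lt_top_iff_ne_top.mpr hμtop⟩⟩
  set S : {c : EReal // μ < c} → Set V := fun c => K ∩ f ⁻¹' Set.Iic c.1 with hS
  have hSne : ∀ c, (S c).Nonempty := by
    rintro ⟨c, hc⟩
    rw [hμ, sInf_lt_iff] at hc
    obtain ⟨v, ⟨x, hxK, rfl⟩, hv⟩ := hc
    exact ⟨x, hxK, le_of_lt hv⟩
  have hScl : ∀ c, IsClosed (S c) := fun c =>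
    hK.isClosed.inter (hf.isClosed_preimage c.1)
  have hScp : ∀ c, IsCompact (S c) := fun c => hK.inter_right (hf.isClosed_preimage c.1)
  have hdir : Directed (· ⊇ ·) S := by
    rintro ⟨c, hc⟩ ⟨d, hd⟩
    refine ⟨⟨min c d, lt_min hc hd⟩, ?_, ?_⟩ <;> intro x hx
    · refine ⟨hx.1, ?_⟩
      have h2 : f x ≤ min c d := hx.2
      show f x ≤ _
      exact le_trans h2 (min_le_left _ _)
    · refine ⟨hx.1, ?_⟩
      have h2 : f x ≤ min c d := hx.2
      show f x ≤ _
      exact le_trans h2 (min_le_right _ _)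
  obtain ⟨x, hx⟩ :=
    IsCompact.nonempty_iInter_of_directed_nonempty_isCompact_isClosed S hdir hSne hScp hScl
  simp only [Set.mem_iInter] at hx
  have hxK : x ∈ K := (hx ⟨⊤, lt_top_iff_ne_top.mpr hμtop⟩).1
  have hfx : f x ≤ μ := by
    apply le_of_forall_gt_imp_ge_of_dense
    intro c hc
    exact (hx ⟨c, hc⟩).2
  exact ⟨x, hxK, fun y hy => hfx.trans (sInf_le (Set.mem_image_of_mem f hy))⟩

lemma sub_coe_ne_bot {x : EReal} (hx : x ≠ ⊥) (c : ℝ) : x - (c : EReal) ≠ ⊥ := by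
  induction x with
  | bot => exact absurd rfl hx
  | coe t => rw [← EReal.coe_sub]; exact EReal.coe_ne_bot _
  | top => rw [EReal.top_sub_coe]; simp

lemma sub_coe_le_coe {x : EReal} {r : ℝ} (h : x ≤ (r : EReal)) (c : ℝ) :
    x - (c : EReal) ≤ ((r - c : ℝ) : EReal) := by
  rw [EReal.coe_sub]; exact EReal.sub_le_sub h le_rfl

lemma ne_top_of_le_coe {x : EReal} {r : ℝ} (h : x ≤ (r : EReal)) : x ≠ ⊤ :=
  fun ht => absurd (ht ▸ h) (by simp)

lemma exists_conj_argmax [FiniteDimensional ℝ V] {m : ℝ} (hm : 0 < m) {g : V → EReal}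
    (hbot : ∀ x, g x ≠ ⊥) (x0 : V) (r0 : ℝ) (h0 : g x0 ≤ (r0 : EReal))
    (hlsc : LowerSemicontinuous g)
    (hsc : ∀ ⦃x y : V⦄ ⦃r s : ℝ⦄, g x ≤ (r : EReal) → g y ≤ (s : EReal) → ∀ a b : ℝ,
       0 ≤ a → 0 ≤ b → a + b = 1 →
       g (a • x + b • y) ≤ ((a * r + b * s - m / 2 * (a * b) * ‖x - y‖ ^ 2 : ℝ) : EReal))
    (y : V) :
    ∃ (x' : V) (r' : ℝ), g x' = (r' : EReal) ∧
      ∀ (x : V) (r : ℝ), g x ≤ (r : EReal) → r' - ⟪x', y⟫_ℝ ≤ r - ⟪x, y⟫_ℝ := by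
  set ψ : V → EReal := fun x => g x - ((⟪x, y⟫_ℝ : ℝ) : EReal) with hψ
  have hψbot : ∀ x, ψ x ≠ ⊥ := fun x => sub_coe_ne_bot (hbot x) _
  have hcont : Continuous fun x : V => ((-⟪x, y⟫_ℝ : ℝ) : EReal) :=
    continuous_coe_real_ereal.comp ((continuous_id.inner continuous_const).neg)
  have hψeq : ∀ x, ψ x = g x + ((-⟪x, y⟫_ℝ : ℝ) : EReal) := by
    intro x; rw [hψ]; simp only [EReal.coe_neg]; rfl
  have hψlsc : LowerSemicontinuous ψ := by
    have : LowerSemicontinuous fun x => g x + ((-⟪x, y⟫_ℝ : ℝ) : EReal) :=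
      hlsc.add' hcont.lowerSemicontinuous
        (fun x => EReal.continuousAt_add (Or.inr (EReal.coe_ne_bot _)) (Or.inl (hbot x)))
    rw [show ψ = _ from funext hψeq]; exact this
  set p0 : ℝ := r0 - ⟪x0, y⟫_ℝ with hp0
  have hψx0 : ψ x0 ≤ (p0 : EReal) := sub_coe_le_coe h0 _
  -- lower bound on the unit ball
  obtain ⟨xm, hxm, hxmmin⟩ := lsc_exists_min hψlsc (isCompact_closedBall x0 1)
    ⟨x0, Metric.mem_closedBall_self (by norm_num)⟩
  set μ : EReal := ψ xm with hμdef
  have hμle : μ ≤ (p0 : EReal) :=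
    le_trans (hxmmin x0 (Metric.mem_closedBall_self (by norm_num))) hψx0
  set μr : ℝ := μ.toReal with hμrdef
  have hμeq : μ = (μr : EReal) := (EReal.coe_toReal (ne_top_of_le_coe hμle) (hψbot xm)).symm
  obtain ⟨R, hR1, hmax2⟩ : ∃ R : ℝ, 1 < R ∧ 2 / m * (1 + p0 - μr) ≤ R - 1 := by
    refine ⟨1 + max 1 (2 / m * (1 + p0 - μr)), ?_, ?_⟩
    · have := le_max_left (1:ℝ) (2 / m * (1 + p0 - μr)); linarith
    · have := le_max_right (1:ℝ) (2 / m * (1 + p0 - μr)); linarith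
  obtain ⟨xs, hxsB, hxsmin⟩ := lsc_exists_min hψlsc (isCompact_closedBall x0 R)
    ⟨x0, Metric.mem_closedBall_self (by linarith)⟩
  have hψs0 : ψ xs ≤ (p0 : EReal) :=
    le_trans (hxsmin x0 (Metric.mem_closedBall_self (by linarith))) hψx0
  have hgxs_ne_top : g xs ≠ ⊤ := by
    intro ht
    rw [hψ] at hψs0; simp only [ht, EReal.top_sub_coe] at hψs0
    exact absurd hψs0 (by simp)
  set r' : ℝ := (g xs).toReal with hr'def
  have hgxs : g xs = (r' : EReal) := (EReal.coe_toReal hgxs_ne_top (hbot xs)).symm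
  have hψxs : ψ xs = ((r' - ⟪xs, y⟫_ℝ : ℝ) : EReal) := by
    rw [hψ]; simp only [hgxs, ← EReal.coe_sub]
  have hr'p0 : r' - ⟪xs, y⟫_ℝ ≤ p0 := by
    rw [hψxs] at hψs0; exact EReal.coe_le_coe_iff.mp hψs0
  refine ⟨xs, r', hgxs, ?_⟩
  intro x r hxr
  have hψx : ψ x ≤ ((r - ⟪x, y⟫_ℝ : ℝ) : EReal) := sub_coe_le_coe hxr _
  by_cases hxB : x ∈ Metric.closedBall x0 R
  · have := hxsmin x hxB
    rw [hψxs] at this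
    exact EReal.coe_le_coe_iff.mp (this.trans hψx)
  · -- coercivity: outside the ball, values are > p0
    set d : ℝ := ‖x - x0‖ with hddef
    have hdR : R < d := by
      simp only [Metric.mem_closedBall, dist_eq_norm] at hxB
      push_neg at hxB; exact hxB
    have hd1 : 1 < d := lt_trans hR1 hdR
    have hd0 : 0 < d := by linarith
    set t : ℝ := 1 / d with htdef
    have ht0 : 0 < t := by positivity
    have ht1 : t < 1 := by rw [htdef]; rw [div_lt_one hd0]; linarith
    set u : V := (1 - t) • x0 + t • x with hudef
    have hu1 : u ∈ Metric.closedBall x0 1 := by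
      have : u - x0 = t • (x - x0) := by rw [hudef]; module
      simp only [Metric.mem_closedBall, dist_eq_norm, this, norm_smul]
      rw [Real.norm_eq_abs, abs_of_pos ht0, htdef, ← hddef]
      rw [one_div, inv_mul_cancel₀ (ne_of_gt hd0)]
    have hgu := hsc h0 hxr (1 - t) t (by linarith) (le_of_lt ht0) (by ring)
    have hμu : μ ≤ ψ u := hxmmin u hu1
    have hψu : ψ u ≤ (((1 - t) * r0 + t * r - m / 2 * ((1 - t) * t) * ‖x0 - x‖ ^ 2
        - ⟪u, y⟫_ℝ : ℝ) : EReal) := sub_coe_le_coe hgu _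
    have hiu : ⟪u, y⟫_ℝ = (1 - t) * ⟪x0, y⟫_ℝ + t * ⟪x, y⟫_ℝ := by
      rw [hudef, inner_add_left, real_inner_smul_left, real_inner_smul_left]
    have hnx : ‖x0 - x‖ = d := by rw [hddef, norm_sub_rev]
    have hμr_le : μr ≤ (1 - t) * r0 + t * r - m / 2 * ((1 - t) * t) * d ^ 2 - ⟪u, y⟫_ℝ := by
      have := hμu.trans hψu
      rw [hμeq, hnx] at this
      exact EReal.coe_le_coe_iff.mp this
    rw [hiu] at hμr_le
    -- now pure real arithmetic
    have htd : t * d = 1 := by rw [htdef]; field_simp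
    have hkey : p0 < r - ⟪x, y⟫_ℝ := by
      have h1 : μr * d ≤ (d - 1) * p0 + (r - ⟪x, y⟫_ℝ) - m / 2 * (d - 1) * d := by
        have e : ((1 - t) * r0 + t * r - m / 2 * ((1 - t) * t) * d ^ 2
            - ((1 - t) * ⟪x0, y⟫_ℝ + t * ⟪x, y⟫_ℝ)) * d
            = (d - 1) * p0 + (r - ⟪x, y⟫_ℝ) - m / 2 * (d - 1) * d := by
          rw [hp0]
          linear_combination (-r0 + r + ⟪x0, y⟫_ℝ - ⟪x, y⟫_ℝ - m / 2 * d ^ 2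
            + m / 2 * d * (t * d + 1)) * htd
        nlinarith [mul_le_mul_of_nonneg_right hμr_le (le_of_lt hd0)]
      -- (m/2)(d-1) > p0 - μr
      have h3 : 2 / m * (1 + p0 - μr) < d - 1 := by linarith
      have h4 : 1 + p0 - μr < m / 2 * (d - 1) := by
        have h5 := mul_lt_mul_of_pos_left h3 (half_pos hm)
        have h6 : m / 2 * (2 / m * (1 + p0 - μr)) = 1 + p0 - μr := by
          field_simp
        linarith [h5, h6]
      nlinarith [h1, h4, hd0]
    linarith [hr'p0, hkey]

lemma quad_growth {m : ℝ} (hm : 0 < m) {g : V → EReal}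
    (hsc : ∀ ⦃x y : V⦄ ⦃r s : ℝ⦄, g x ≤ (r : EReal) → g y ≤ (s : EReal) → ∀ a b : ℝ,
       0 ≤ a → 0 ≤ b → a + b = 1 →
       g (a • x + b • y) ≤ ((a * r + b * s - m / 2 * (a * b) * ‖x - y‖ ^ 2 : ℝ) : EReal))
    {y x' : V} {r' : ℝ} (hx' : g x' = (r' : EReal))
    (hmin : ∀ (x : V) (r : ℝ), g x ≤ (r : EReal) → r' - ⟪x', y⟫_ℝ ≤ r - ⟪x, y⟫_ℝ)
    {x : V} {r : ℝ} (hx : g x ≤ (r : EReal)) :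
    r' - ⟪x', y⟫_ℝ + m / 2 * ‖x - x'‖ ^ 2 ≤ r - ⟪x, y⟫_ℝ := by
  obtain ⟨D, hD⟩ : ∃ D : ℝ, D = ‖x' - x‖ := ⟨_, rfl⟩
  have hDnn : 0 ≤ D := hD ▸ norm_nonneg _
  have hDx : ‖x - x'‖ = D := by rw [hD, norm_sub_rev]
  rw [hDx]
  have key : ∀ t : ℝ, 0 < t → t < 1 →
      r' - ⟪x', y⟫_ℝ + m / 2 * (1 - t) * D ^ 2 ≤ r - ⟪x, y⟫_ℝ := by
    intro t ht0 ht1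
    have hgt := hsc hx'.le hx (1 - t) t (by linarith) (le_of_lt ht0) (by ring)
    rw [← hD] at hgt
    have hmt := hmin _ _ hgt
    have hi : ⟪(1 - t) • x' + t • x, y⟫_ℝ = (1 - t) * ⟪x', y⟫_ℝ + t * ⟪x, y⟫_ℝ := by
      rw [inner_add_left, real_inner_smul_left, real_inner_smul_left]
    rw [hi] at hmt
    -- hmt : r' - ⟪x',y⟫ ≤ (1-t)r' + tr - m/2 (1-t)t D² - ((1-t)⟪x'⟫ + t⟪x⟫)
    have h2 : t * (r' - ⟪x', y⟫_ℝ) + m / 2 * ((1 - t) * t) * D ^ 2 ≤ t * (r - ⟪x, y⟫_ℝ) := by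
      nlinarith [hmt]
    nlinarith [h2, ht0]
  by_contra hcon
  push_neg at hcon
  obtain ⟨ε, hε⟩ : ∃ ε : ℝ, ε = (r' - ⟪x', y⟫_ℝ + m / 2 * D ^ 2) - (r - ⟪x, y⟫_ℝ) := ⟨_, rfl⟩
  have hε0 : 0 < ε := by rw [hε]; linarith
  by_cases hD0 : D = 0
  · have := key (1/2) (by norm_num) (by norm_num)
    rw [hD0] at this hε
    simp at this hε
    linarith
  · have hDpos : 0 < D := lt_of_le_of_ne hDnn (Ne.symm hD0)
    obtain ⟨t, htpos, htlt, h4⟩ : ∃ t : ℝ, 0 < t ∧ t < 1 ∧ t ≤ ε / (m * D ^ 2) := by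
      refine ⟨min (1/2) (ε / (m * D ^ 2)), ?_, ?_, min_le_right _ _⟩
      · apply lt_min (by norm_num); positivity
      · exact lt_of_le_of_lt (min_le_left _ _) (by norm_num)
    have h3 := key t htpos htlt
    have h5 : m / 2 * t * D ^ 2 ≤ ε / 2 := by
      have h6 : t * (m * D ^ 2) ≤ ε := by
        rw [div_eq_mul_inv] at h4
        have hmD : 0 < m * D ^ 2 := by positivity
        calc t * (m * D ^ 2) ≤ ε * (m * D ^ 2)⁻¹ * (m * D ^ 2) :=
              mul_le_mul_of_nonneg_right h4 (le_of_lt hmD)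
          _ = ε := by field_simp
      have h7 : m / 2 * t * D ^ 2 = t * (m * D ^ 2) / 2 := by ring
      linarith
  -- h3 : ... + m/2 (1-t) D² ≤ ..., so ε ≤ m/2 t D² ≤ ε/2, contradiction
    nlinarith [h3, h5, hε0]

lemma forward_direction [FiniteDimensional ℝ V] {m : ℝ} (hm : 0 < m)
    {g : V → EReal}
    (hproper : ProperE g) (hlsc : LowerSemicontinuous g) (hsc : StrongConvexE m g) :
    ∃ G : V → ℝ, (∀ y, econj g y = ((G y : ℝ) : EReal)) ∧ Differentiable ℝ G ∧
      ∀ y z, ‖gradient G y - gradient G z‖ ≤ (1 / m) * ‖y - z‖ := by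
  obtain ⟨hbot, x0, hx0⟩ := hproper
  have hsc' := (strongConvexE_iff hbot).mp hsc
  have h0 : g x0 ≤ ((g x0).toReal : EReal) := (EReal.coe_toReal hx0 (hbot x0)).symm.le
  have hex : ∀ y : V, ∃ (x' : V) (r' : ℝ), g x' = (r' : EReal) ∧
      ∀ (x : V) (r : ℝ), g x ≤ (r : EReal) → r' - ⟪x', y⟫_ℝ ≤ r - ⟪x, y⟫_ℝ :=
    fun y => exists_conj_argmax hm hbot x0 _ h0 hlsc hsc' y
  choose X Rr hX hmin using hex
  have hconj : ∀ y, econj g y = ((⟪X y, y⟫_ℝ - Rr y : ℝ) : EReal) := by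
    intro y
    apply le_antisymm
    · apply iSup_le
      intro x
      by_cases hx : g x = ⊤
      · rw [hx]
        have hb : ((⟪x, y⟫_ℝ : ℝ) : EReal) - ⊤ = ⊥ := by simp
        rw [hb]; exact bot_le
      · have hxr : g x = ((g x).toReal : EReal) := (EReal.coe_toReal hx (hbot x)).symm
        rw [hxr, ← EReal.coe_sub, EReal.coe_le_coe_iff]
        have := hmin y x _ hxr.le
        linarith
    · have heq : ((⟪X y, y⟫_ℝ - Rr y : ℝ) : EReal) = (⟪X y, y⟫_ℝ : EReal) - g (X y) := by
        rw [hX y, ← EReal.coe_sub]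
      rw [heq]
      exact le_iSup (fun x => ((⟪x, y⟫_ℝ : ℝ) : EReal) - g x) (X y)
  have hsub : ∀ y z : V, (⟪X y, y⟫_ℝ - Rr y) + ⟪X y, z - y⟫_ℝ ≤ ⟪X z, z⟫_ℝ - Rr z := by
    intro y z
    have h := hmin z (X y) (Rr y) (hX y).le
    rw [inner_sub_right]; linarith
  have hlipX : ∀ y z, ‖X y - X z‖ ≤ 1 / m * ‖y - z‖ := by
    intro y z
    have h1 := quad_growth hm hsc' (hX y) (hmin y) (hX z).le
    have h2 := quad_growth hm hsc' (hX z) (hmin z) (hX y).le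
    have hd : ‖X z - X y‖ = ‖X y - X z‖ := norm_sub_rev _ _
    rw [hd] at h1
    have h3 : m * ‖X y - X z‖ ^ 2 ≤ ⟪X y - X z, y - z⟫_ℝ := by
      have he : ⟪X y - X z, y - z⟫_ℝ
          = ⟪X y, y⟫_ℝ - ⟪X y, z⟫_ℝ - ⟪X z, y⟫_ℝ + ⟪X z, z⟫_ℝ := by
        rw [inner_sub_left, inner_sub_right, inner_sub_right]; ring
      rw [he]; nlinarith [h1, h2]
    have h4 : ⟪X y - X z, y - z⟫_ℝ ≤ ‖X y - X z‖ * ‖y - z‖ := real_inner_le_norm _ _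
    rcases eq_or_lt_of_le (norm_nonneg (X y - X z)) with h5 | h5
    · rw [← h5]; positivity
    · have h6 : m * ‖X y - X z‖ ≤ ‖y - z‖ := by nlinarith [h3, h4, h5]
      rw [div_mul_eq_mul_div, one_mul, le_div_iff₀ hm]
      linarith
  have hgrad : ∀ y, HasGradientAt (fun w => ⟪X w, w⟫_ℝ - Rr w) (X y) y := by
    intro y
    rw [hasGradientAt_iff_hasFDerivAt, hasFDerivAt_iff_isLittleO_nhds_zero]
    rw [Asymptotics.isLittleO_iff]
    intro c hc
    have hball : Metric.ball (0 : V) (c * m) ∈ nhds (0 : V) :=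
      Metric.ball_mem_nhds _ (by positivity)
    filter_upwards [hball] with h hh
    have hnorm : ‖h‖ < c * m := by simpa [dist_eq_norm] using hh
    simp only [InnerProductSpace.toDual_apply_apply]
    have hlow : 0 ≤ (⟪X (y + h), y + h⟫_ℝ - Rr (y + h)) - (⟪X y, y⟫_ℝ - Rr y)
        - ⟪X y, h⟫_ℝ := by
      have h5 := hsub y (y + h)
      have he : y + h - y = h := by abel
      rw [he] at h5; linarith
    have hup : (⟪X (y + h), y + h⟫_ℝ - Rr (y + h)) - (⟪X y, y⟫_ℝ - Rr y) - ⟪X y, h⟫_ℝ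
        ≤ 1 / m * ‖h‖ ^ 2 := by
      have h6 := hsub (y + h) y
      have he : y - (y + h) = -h := by abel
      rw [he, inner_neg_right] at h6
      have h7 : (⟪X (y + h), y + h⟫_ℝ - Rr (y + h)) - (⟪X y, y⟫_ℝ - Rr y) - ⟪X y, h⟫_ℝ
          ≤ ⟪X (y + h) - X y, h⟫_ℝ := by
        rw [inner_sub_left]; linarith
      have h8 : ⟪X (y + h) - X y, h⟫_ℝ ≤ ‖X (y + h) - X y‖ * ‖h‖ := real_inner_le_norm _ _
      have h9 : ‖X (y + h) - X y‖ ≤ 1 / m * ‖h‖ := by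
        have h10 := hlipX (y + h) y
        have he2 : y + h - y = h := by abel
        rwa [he2] at h10
      calc (⟪X (y + h), y + h⟫_ℝ - Rr (y + h)) - (⟪X y, y⟫_ℝ - Rr y) - ⟪X y, h⟫_ℝ
          ≤ ‖X (y + h) - X y‖ * ‖h‖ := le_trans h7 h8
        _ ≤ (1 / m * ‖h‖) * ‖h‖ := mul_le_mul_of_nonneg_right h9 (norm_nonneg _)
        _ = 1 / m * ‖h‖ ^ 2 := by ring
    show ‖(⟪X (y + h), y + h⟫_ℝ - Rr (y + h)) - (⟪X y, y⟫_ℝ - Rr y) - ⟪X y, h⟫_ℝ‖ ≤ c * ‖h‖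
    rw [Real.norm_eq_abs, abs_of_nonneg hlow]
    have h11 : 1 / m * ‖h‖ ≤ c := by
      have h12 : 1 / m * ‖h‖ ≤ 1 / m * (c * m) :=
        mul_le_mul_of_nonneg_left hnorm.le (by positivity)
      have h13 : 1 / m * (c * m) = c := by field_simp
      linarith
    calc (⟪X (y + h), y + h⟫_ℝ - Rr (y + h)) - (⟪X y, y⟫_ℝ - Rr y) - ⟪X y, h⟫_ℝ
        ≤ 1 / m * ‖h‖ ^ 2 := hup
      _ = (1 / m * ‖h‖) * ‖h‖ := by ring
      _ ≤ c * ‖h‖ := mul_le_mul_of_nonneg_right h11 (norm_nonneg _)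
  refine ⟨fun w => ⟪X w, w⟫_ℝ - Rr w, hconj, fun y => (hgrad y).differentiableAt, fun y z => ?_⟩
  rw [(hgrad y).gradient, (hgrad z).gradient]
  exact hlipX y z

lemma fenchel_lower {g : V → EReal} (hbot : ∀ x, g x ≠ ⊥) {G : V → ℝ}
    (hG1 : ∀ y, econj g y = ((G y : ℝ) : EReal)) (x w : V) :
    ((⟪x, w⟫_ℝ - G w : ℝ) : EReal) ≤ g x := by
  have h := le_iSup (fun x => ((⟪x, w⟫_ℝ : ℝ) : EReal) - g x) x
  rw [← econj, hG1 w] at h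
  by_cases hx : g x = ⊤
  · rw [hx]; exact le_top
  · have hxr : g x = ((g x).toReal : EReal) := (EReal.coe_toReal hx (hbot x)).symm
    rw [hxr] at h
    rw [← EReal.coe_sub, EReal.coe_le_coe_iff] at h
    rw [hxr, EReal.coe_le_coe_iff]
    linarith

lemma ereal_le_of_forall_real_lt {a b : EReal} (h : ∀ r : ℝ, (r : EReal) < a → (r : EReal) ≤ b) :
    a ≤ b := by
  by_contra hab
  push_neg at hab
  obtain ⟨c, hc1, hc2⟩ := EReal.exists_between_coe_real hab
  exact absurd (h c hc2) (not_le.mpr hc1)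

lemma descent_lemma [CompleteSpace V] {m : ℝ} (hm : 0 < m) {G : V → ℝ}
    (hdiff : Differentiable ℝ G)
    (hlip : ∀ y z, ‖gradient G y - gradient G z‖ ≤ 1 / m * ‖y - z‖) (y v : V) :
    G (y + v) ≤ G y + ⟪gradient G y, v⟫_ℝ + 1 / (2 * m) * ‖v‖ ^ 2 := by
  have hφ : ∀ t : ℝ, HasDerivAt (fun t : ℝ => G (y + t • v))
      (⟪gradient G (y + t • v), v⟫_ℝ) t := by
    intro t
    have hline : HasDerivAt (fun t : ℝ => y + t • v) v t := by
      simpa using ((hasDerivAt_id t).smul_const v).const_add y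
    have hg := ((hdiff (y + t • v)).hasGradientAt).hasFDerivAt
    have h2 := hg.comp_hasDerivAt t hline
    simpa [InnerProductSpace.toDual_apply_apply, Function.comp_def] using h2
  have hθ : ∀ t : ℝ, HasDerivAt
      (fun t : ℝ => G (y + t • v) - G y - t * ⟪gradient G y, v⟫_ℝ
        - 1 / m / 2 * ‖v‖ ^ 2 * t ^ 2)
      (⟪gradient G (y + t • v), v⟫_ℝ - ⟪gradient G y, v⟫_ℝ - 1 / m * ‖v‖ ^ 2 * t) t := by
    intro t
    have h1 := ((hφ t).sub_const (G y)).sub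
      ((hasDerivAt_id t).mul_const (⟪gradient G y, v⟫_ℝ))
    have h2 : HasDerivAt (fun t : ℝ => 1 / m / 2 * ‖v‖ ^ 2 * t ^ 2)
        (1 / m / 2 * ‖v‖ ^ 2 * (2 * t)) t := by
      have h3 := (hasDerivAt_pow 2 t).const_mul (1 / m / 2 * ‖v‖ ^ 2)
      exact h3.congr_deriv (by push_cast; ring)
    exact (h1.sub h2).congr_deriv (by ring)
  have hderiv_nonpos : ∀ t ∈ Set.Ioo (0 : ℝ) 1,
      ⟪gradient G (y + t • v), v⟫_ℝ - ⟪gradient G y, v⟫_ℝ - 1 / m * ‖v‖ ^ 2 * t ≤ 0 := by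
    intro t ht
    have h4 : ⟪gradient G (y + t • v) - gradient G y, v⟫_ℝ
        ≤ ‖gradient G (y + t • v) - gradient G y‖ * ‖v‖ := real_inner_le_norm _ _
    have h5 : ‖gradient G (y + t • v) - gradient G y‖ ≤ 1 / m * ‖t • v‖ := by
      have h6 := hlip (y + t • v) y
      simpa using h6
    have h6 : ‖t • v‖ = t * ‖v‖ := by
      rw [norm_smul, Real.norm_eq_abs, abs_of_pos ht.1]
    have h7 : ⟪gradient G (y + t • v) - gradient G y, v⟫_ℝ
        = ⟪gradient G (y + t • v), v⟫_ℝ - ⟪gradient G y, v⟫_ℝ := by rw [inner_sub_left]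
    rw [h6] at h5
    nlinarith [h4, norm_nonneg v, mul_le_mul_of_nonneg_right h5 (norm_nonneg v)]
  have hanti : AntitoneOn (fun t : ℝ => G (y + t • v) - G y - t * ⟪gradient G y, v⟫_ℝ
      - 1 / m / 2 * ‖v‖ ^ 2 * t ^ 2) (Set.Icc (0 : ℝ) 1) := by
    apply antitoneOn_of_deriv_nonpos (convex_Icc 0 1)
    · exact Continuous.continuousOn
        (continuous_iff_continuousAt.mpr fun t => (hθ t).continuousAt)
    · intro t ht
      exact ((hθ t).differentiableAt).differentiableWithinAt
    · intro t ht
      rw [interior_Icc] at ht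
      rw [(hθ t).deriv]
      exact hderiv_nonpos t ht
  have h8 := hanti (Set.left_mem_Icc.mpr zero_le_one) (Set.right_mem_Icc.mpr zero_le_one)
    zero_le_one
  simp only [zero_smul, add_zero, one_smul, zero_mul, sub_zero, one_pow, mul_one, zero_pow,
    sub_self, ne_eq, OfNat.ofNat_ne_zero, not_false_eq_true] at h8
  have hLm : 1 / m / 2 = 1 / (2 * m) := by field_simp
  rw [hLm] at h8
  linarith [h8]

lemma coe_sub_top' (a : ℝ) : (a : EReal) - ⊤ = ⊥ := by simp

lemma lower_quad [CompleteSpace V] {m : ℝ} (hm : 0 < m) {g : V → EReal}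
    (hbot : ∀ x, g x ≠ ⊥) {G : V → ℝ}
    (hG1 : ∀ y, econj g y = ((G y : ℝ) : EReal))
    (hdiff : Differentiable ℝ G)
    (hlip : ∀ y z, ‖gradient G y - gradient G z‖ ≤ 1 / m * ‖y - z‖) (x w : V) :
    ((⟪x, w⟫_ℝ - G w + m / 2 * ‖x - gradient G w‖ ^ 2 : ℝ) : EReal) ≤ g x := by
  have hd := descent_lemma hm hdiff hlip w (m • (x - gradient G w))
  have h1 := fenchel_lower hbot hG1 x (w + m • (x - gradient G w))
  refine le_trans ?_ h1
  rw [EReal.coe_le_coe_iff]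
  have e1 : ⟪x, w + m • (x - gradient G w)⟫_ℝ = ⟪x, w⟫_ℝ + m * ⟪x, x - gradient G w⟫_ℝ := by
    rw [inner_add_right, real_inner_smul_right]
  have e2 : ⟪gradient G w, m • (x - gradient G w)⟫_ℝ
      = m * ⟪gradient G w, x - gradient G w⟫_ℝ := real_inner_smul_right _ _ _
  have e3 : ‖m • (x - gradient G w)‖ ^ 2 = m ^ 2 * ‖x - gradient G w‖ ^ 2 := by
    rw [norm_smul, Real.norm_eq_abs, mul_pow, sq_abs]
  have e4 : ⟪x, x - gradient G w⟫_ℝ - ⟪gradient G w, x - gradient G w⟫_ℝ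
      = ‖x - gradient G w‖ ^ 2 := by
    rw [← inner_sub_left, real_inner_self_eq_norm_sq]
  have e5 : 1 / (2 * m) * (m ^ 2 * ‖x - gradient G w‖ ^ 2)
      = m / 2 * ‖x - gradient G w‖ ^ 2 := by field_simp
  rw [e2, e3, e5] at hd
  rw [e1]
  nlinarith [hd, e4]

lemma biconj_ge [FiniteDimensional ℝ V] {g : V → EReal} (hbot : ∀ x, g x ≠ ⊥)
    (hfin : ∃ x, g x ≠ ⊤) (hlsc : LowerSemicontinuous g) (hconv : ConvexFnE g)
    {G : V → ℝ} (hG1 : ∀ y, econj g y = ((G y : ℝ) : EReal)) (x0 : V) :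
    g x0 ≤ ⨆ w, ((⟪x0, w⟫_ℝ - G w : ℝ) : EReal) := by
  haveI : CompleteSpace V := FiniteDimensional.complete ℝ V
  apply ereal_le_of_forall_real_lt
  intro r hr
  have hclosed : IsClosed {q : V × ℝ | g q.1 ≤ (q.2 : EReal)} := by
    have h1 := lowerSemicontinuous_iff_isClosed_epigraph.mp hlsc
    have h2 : Continuous fun q : V × ℝ => (q.1, (q.2 : EReal)) :=
      continuous_fst.prodMk (continuous_coe_real_ereal.comp continuous_snd)
    exact h1.preimage h2
  have hx0r : (x0, r) ∉ {q : V × ℝ | g q.1 ≤ (q.2 : EReal)} :=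
    fun hmem => absurd hr (not_lt.mpr hmem)
  obtain ⟨f, u, hf1, hf2⟩ := geometric_hahn_banach_point_closed hconv hclosed hx0r
  obtain ⟨y', hy'⟩ : ∃ y' : V, y' = (InnerProductSpace.toDual ℝ V).symm
    (f.comp (ContinuousLinearMap.inl ℝ V ℝ)) := ⟨_, rfl⟩
  obtain ⟨c, hc⟩ : ∃ c : ℝ, c = f (0, 1) := ⟨_, rfl⟩
  have hdecomp : ∀ q : V × ℝ, f q = ⟪y', q.1⟫_ℝ + c * q.2 := by
    rintro ⟨x, s⟩
    have e1 : (x, s) = ((x, (0:ℝ)) : V × ℝ) + ((0 : V), s) := by simp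
    have hfx : f ((x, (0:ℝ)) : V × ℝ) = ⟪y', x⟫_ℝ := by
      rw [hy', InnerProductSpace.toDual_symm_apply]
      simp
    have hfs : f (((0:V), s) : V × ℝ) = c * s := by
      have e2 : (((0:V), s) : V × ℝ) = s • (((0:V), (1:ℝ)) : V × ℝ) := by simp
      rw [e2, map_smul, smul_eq_mul, hc, mul_comm]
    rw [e1, map_add, hfx, hfs]
    simp
  obtain ⟨x1, hx1⟩ := hfin
  have hx1r : g x1 = (((g x1).toReal : ℝ) : EReal) := (EReal.coe_toReal hx1 (hbot x1)).symm
  have hcnn : 0 ≤ c := by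
    by_contra hcneg
    push_neg at hcneg
    have hs : g x1 ≤ ((max ((g x1).toReal) ((u - ⟪y', x1⟫_ℝ) / c) : ℝ) : EReal) := by
      rw [hx1r]; exact EReal.coe_le_coe_iff.mpr (le_max_left _ _)
    have hmem := hf2 (x1, max ((g x1).toReal) ((u - ⟪y', x1⟫_ℝ) / c)) hs
    rw [hdecomp] at hmem
    have h3 : c * max ((g x1).toReal) ((u - ⟪y', x1⟫_ℝ) / c)
        ≤ c * ((u - ⟪y', x1⟫_ℝ) / c) :=
      mul_le_mul_of_nonpos_left (le_max_right _ _) hcneg.le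
    rw [mul_div_cancel₀ _ (ne_of_lt hcneg)] at h3
    simp only at hmem
    linarith
  by_cases hcpos : 0 < c
  · -- positive vertical component
    have hbound : ∀ x : V, ((⟪x, (-(1/c)) • y'⟫_ℝ : ℝ) : EReal) - g x
        ≤ (((-u)/c : ℝ) : EReal) := by
      intro x
      by_cases hx : g x = ⊤
      · rw [hx, coe_sub_top']; exact bot_le
      · have hxr : g x = (((g x).toReal : ℝ) : EReal) := (EReal.coe_toReal hx (hbot x)).symm
        have hmem := hf2 (x, (g x).toReal) hxr.le
        rw [hdecomp] at hmem
        simp only at hmem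
        rw [hxr, ← EReal.coe_sub, EReal.coe_le_coe_iff]
        have hi : ⟪x, (-(1/c)) • y'⟫_ℝ = -(1/c) * ⟪y', x⟫_ℝ := by
          rw [real_inner_smul_right, real_inner_comm]
        rw [hi]
        have h3 : (u - ⟪y', x⟫_ℝ)/c < (g x).toReal := by
          rw [div_lt_iff₀ hcpos]; linarith
        have h4 : -(1/c) * ⟪y', x⟫_ℝ - (u - ⟪y', x⟫_ℝ)/c = -u/c := by
          field_simp; ring
        linarith
    have hGw : G ((-(1/c)) • y') ≤ -u/c := by
      have h5 : econj g ((-(1/c)) • y') ≤ (((-u)/c : ℝ) : EReal) := iSup_le hbound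
      rw [hG1, EReal.coe_le_coe_iff] at h5
      exact h5
    have hterm : r < ⟪x0, (-(1/c)) • y'⟫_ℝ - G ((-(1/c)) • y') := by
      have h6 : ⟪y', x0⟫_ℝ + c * r < u := by
        have := hf1; rw [hdecomp] at this; simpa using this
      have h7 : r < (u - ⟪y', x0⟫_ℝ)/c := by
        rw [lt_div_iff₀ hcpos]; linarith
      have hi : ⟪x0, (-(1/c)) • y'⟫_ℝ = -(1/c) * ⟪y', x0⟫_ℝ := by
        rw [real_inner_smul_right, real_inner_comm]
      have h8 : -(1/c) * ⟪y', x0⟫_ℝ - (-u/c) = (u - ⟪y', x0⟫_ℝ)/c := by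
        field_simp; ring
      rw [hi]
      linarith
    calc ((r : ℝ) : EReal) ≤ ((⟪x0, (-(1/c)) • y'⟫_ℝ - G ((-(1/c)) • y') : ℝ) : EReal) :=
          EReal.coe_le_coe_iff.mpr hterm.le
      _ ≤ ⨆ w, ((⟪x0, w⟫_ℝ - G w : ℝ) : EReal) :=
          le_iSup (fun w => ((⟪x0, w⟫_ℝ - G w : ℝ) : EReal)) _
  · -- c = 0 : vertical separation, use a recession direction
    have hc0 : c = 0 := le_antisymm (not_lt.mp hcpos) hcnn
    have hx0u : ⟪y', x0⟫_ℝ < u := by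
      have := hf1; rw [hdecomp, hc0] at this; simpa using this
    have hε : 0 < u - ⟪y', x0⟫_ℝ := by linarith
    obtain ⟨lam, hlam0, hlam⟩ : ∃ lam : ℝ, 0 ≤ lam ∧
        r + 1 + G 0 ≤ lam * (u - ⟪y', x0⟫_ℝ) := by
      refine ⟨max 0 ((r + 1 + G 0) / (u - ⟪y', x0⟫_ℝ)), le_max_left _ _, ?_⟩
      calc r + 1 + G 0 = ((r + 1 + G 0) / (u - ⟪y', x0⟫_ℝ)) * (u - ⟪y', x0⟫_ℝ) := by
            field_simp
        _ ≤ max 0 ((r + 1 + G 0) / (u - ⟪y', x0⟫_ℝ)) * (u - ⟪y', x0⟫_ℝ) :=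
            mul_le_mul_of_nonneg_right (le_max_right _ _) hε.le
    have hbound : ∀ x : V, ((⟪x, (-lam) • y'⟫_ℝ : ℝ) : EReal) - g x
        ≤ ((G 0 - lam * u : ℝ) : EReal) := by
      intro x
      by_cases hx : g x = ⊤
      · rw [hx, coe_sub_top']; exact bot_le
      · have hxr : g x = (((g x).toReal : ℝ) : EReal) := (EReal.coe_toReal hx (hbot x)).symm
        have hmem := hf2 (x, (g x).toReal) hxr.le
        rw [hdecomp, hc0] at hmem
        simp only [zero_mul, add_zero] at hmem
        have hfl := fenchel_lower hbot hG1 x 0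
        rw [hxr, EReal.coe_le_coe_iff] at hfl
        rw [inner_zero_right] at hfl
        rw [hxr, ← EReal.coe_sub, EReal.coe_le_coe_iff]
        have hi : ⟪x, (-lam) • y'⟫_ℝ = -lam * ⟪y', x⟫_ℝ := by
          rw [real_inner_smul_right, real_inner_comm]
        rw [hi]
        have h9 : lam * u ≤ lam * ⟪y', x⟫_ℝ := mul_le_mul_of_nonneg_left hmem.le hlam0
        linarith
    have hGw : G ((-lam) • y') ≤ G 0 - lam * u := by
      have h5 : econj g ((-lam) • y') ≤ ((G 0 - lam * u : ℝ) : EReal) := iSup_le hbound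
      rw [hG1, EReal.coe_le_coe_iff] at h5
      exact h5
    have hterm : r < ⟪x0, (-lam) • y'⟫_ℝ - G ((-lam) • y') := by
      have hi : ⟪x0, (-lam) • y'⟫_ℝ = -lam * ⟪y', x0⟫_ℝ := by
        rw [real_inner_smul_right, real_inner_comm]
      rw [hi]
      nlinarith [hGw, hlam]
    calc ((r : ℝ) : EReal) ≤ ((⟪x0, (-lam) • y'⟫_ℝ - G ((-lam) • y') : ℝ) : EReal) :=
          EReal.coe_le_coe_iff.mpr hterm.le
      _ ≤ ⨆ w, ((⟪x0, w⟫_ℝ - G w : ℝ) : EReal) :=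
          le_iSup (fun w => ((⟪x0, w⟫_ℝ - G w : ℝ) : EReal)) _

lemma backward_direction [FiniteDimensional ℝ V] {m : ℝ} (hm : 0 < m) {g : V → EReal}
    (hproper : ProperE g) (hlsc : LowerSemicontinuous g) (hconv : ConvexFnE g)
    {G : V → ℝ} (hG1 : ∀ y, econj g y = ((G y : ℝ) : EReal))
    (hdiff : Differentiable ℝ G)
    (hlip : ∀ y z, ‖gradient G y - gradient G z‖ ≤ (1 / m) * ‖y - z‖) :
    StrongConvexE m g := by
  haveI : CompleteSpace V := FiniteDimensional.complete ℝ V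
  obtain ⟨hbot, hfin⟩ := hproper
  rw [strongConvexE_iff hbot]
  intro x z r s hx hz a b ha hb hab
  have hbi := biconj_ge hbot hfin hlsc hconv hG1 (a • x + b • z)
  refine le_trans hbi (iSup_le ?_)
  intro w
  rw [EReal.coe_le_coe_iff]
  have h1 := lower_quad hm hbot hG1 hdiff hlip x w
  have h2 := lower_quad hm hbot hG1 hdiff hlip z w
  have h1' : ⟪x, w⟫_ℝ - G w + m/2 * ‖x - gradient G w‖^2 ≤ r :=
    EReal.coe_le_coe_iff.mp (le_trans h1 hx)
  have h2' : ⟪z, w⟫_ℝ - G w + m/2 * ‖z - gradient G w‖^2 ≤ s :=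
    EReal.coe_le_coe_iff.mp (le_trans h2 hz)
  have e0 : ⟪a • x + b • z, w⟫_ℝ = a * ⟪x, w⟫_ℝ + b * ⟪z, w⟫_ℝ := by
    rw [inner_add_left, real_inner_smul_left, real_inner_smul_left]
  have hiden : a * ‖x - gradient G w‖^2 + b * ‖z - gradient G w‖^2
      = ‖(a • x + b • z) - gradient G w‖^2 + a * b * ‖x - z‖^2 := by
    have h3 := norm_combo_sq (x - gradient G w) (z - gradient G w) a b hab
    have e1 : a • (x - gradient G w) + b • (z - gradient G w)
        = (a • x + b • z) - (a + b) • gradient G w := by module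
    rw [hab, one_smul] at e1
    have e2 : (x - gradient G w) - (z - gradient G w) = x - z := by abel
    rw [e1, e2] at h3
    linarith
  rw [e0]
  have ha1 := mul_le_mul_of_nonneg_left h1' ha
  have hb1 := mul_le_mul_of_nonneg_left h2' hb
  have hGw1 : a * G w + b * G w = G w := by rw [← add_mul, hab, one_mul]
  have hsum : a * ⟪x, w⟫_ℝ + b * ⟪z, w⟫_ℝ - G w
      + m/2 * (a * ‖x - gradient G w‖^2 + b * ‖z - gradient G w‖^2) ≤ a * r + b * s := by
    nlinarith [ha1, hb1, hGw1]
  have hiden2 : m/2 * (a * ‖x - gradient G w‖^2 + b * ‖z - gradient G w‖^2)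
      = m/2 * (‖(a • x + b • z) - gradient G w‖^2 + a * b * ‖x - z‖^2) := by
    rw [hiden]
  have hN3 : 0 ≤ m/2 * ‖(a • x + b • z) - gradient G w‖^2 := by positivity
  have hiden3 : m/2 * (‖(a • x + b • z) - gradient G w‖^2 + a * b * ‖x - z‖^2)
      = m/2 * ‖(a • x + b • z) - gradient G w‖^2 + m/2 * (a * b) * ‖x - z‖^2 := by ring
  linarith [hsum, hiden2, hiden3, hN3]


/-- A proper lsc convex `g` is `m`-strongly convex iff `g*` is (finite-valued and)
differentiable on all of `ℝᵖ` with `(1/m)`-Lipschitz gradient. -/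
theorem strong_convexity_iff_conjugate_lipschitz_gradient (p : ℕ) (m : ℝ) (hm : 0 < m)
    (g : EuclideanSpace ℝ (Fin p) → EReal)
    (hproper : ProperE g) (hlsc : LowerSemicontinuous g) (hconv : ConvexFnE g) :
    StrongConvexE m g ↔
      ∃ G : EuclideanSpace ℝ (Fin p) → ℝ,
        (∀ y, econj g y = ((G y : ℝ) : EReal)) ∧
        Differentiable ℝ G ∧
        ∀ y z, ‖gradient G y - gradient G z‖ ≤ (1 / m) * ‖y - z‖ := by
  constructor
  · intro hsc
    exact forward_direction hm hproper hlsc hsc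
  · rintro ⟨G, hG1, hdiff, hlip⟩
    exact backward_direction hm hproper hlsc hconv hG1 hdiff hlip
end
end
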